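/- Let U*, Ū ∈ ℝ^{n×k} be orthonormal matrices. Then there exists an orthogonal matrix R ∈ ℝ^{k×k} (i.e., RᵀR = I_k) such that ‖U* R − Ū‖₂² ≤ 2·dist(Ū, U*)², and consequently ‖U* R − Ū‖_F ≤ √(2k)·dist(Ū, U*). -/

import Mathlib

open Matrix

/-- Euclidean norm of a vector in `ℝ^k`. -/
noncomputable def vecNorm {k : ℕ} (v : Fin k → ℝ) : ℝ := Real.sqrt (∑ i, v i ^ 2)

/-- Spectral norm (largest singular value) of a real matrix. -/
noncomputable def specNorm {m n : ℕ} (A : Matrix (Fin m) (Fin n) ℝ) : ℝ :=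
  sSup {c : ℝ | ∃ x : Fin n → ℝ, vecNorm x = 1 ∧ c = vecNorm (A.mulVec x)}

/-- Frobenius norm of a real matrix. -/
noncomputable def frobNorm {m n : ℕ} (A : Matrix (Fin m) (Fin n) ℝ) : ℝ :=
  Real.sqrt (∑ i, ∑ j, A i j ^ 2)

/-- Subspace distance between the column spaces of two orthonormal matrices. -/
noncomputable def distS {n k : ℕ} (X Y : Matrix (Fin n) (Fin k) ℝ) : ℝ :=
  specNorm (X * Xᵀ - Y * Yᵀ)

section aux

lemma sum_sq_nonneg' {k : ℕ} (v : Fin k → ℝ) : 0 ≤ ∑ i, v i ^ 2 :=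
  Finset.sum_nonneg fun _ _ => sq_nonneg _

lemma vecNorm_nonneg {k : ℕ} (v : Fin k → ℝ) : 0 ≤ vecNorm v := Real.sqrt_nonneg _

lemma vecNorm_sq {k : ℕ} (v : Fin k → ℝ) : vecNorm v ^ 2 = ∑ i, v i ^ 2 :=
  Real.sq_sqrt (sum_sq_nonneg' v)

lemma sum_sq_eq_dot {k : ℕ} (v : Fin k → ℝ) : ∑ i, v i ^ 2 = v ⬝ᵥ v := by
  simp [dotProduct, sq]

lemma quad {m n : ℕ} (A : Matrix (Fin m) (Fin n) ℝ) (x : Fin n → ℝ) :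
    (A *ᵥ x) ⬝ᵥ (A *ᵥ x) = x ⬝ᵥ ((Aᵀ * A) *ᵥ x) := by
  symm
  rw [← mulVec_mulVec, dotProduct_mulVec, vecMul_transpose]

lemma conjT_eq {m n : ℕ} (A : Matrix (Fin m) (Fin n) ℝ) : Aᴴ = Aᵀ := by
  ext i j; simp [conjTranspose_apply]

lemma specNorm_bddAbove {m n : ℕ} (A : Matrix (Fin m) (Fin n) ℝ) :
    BddAbove {c : ℝ | ∃ x : Fin n → ℝ, vecNorm x = 1 ∧ c = vecNorm (A.mulVec x)} := by
  refine ⟨Real.sqrt (∑ i, ∑ j, A i j ^ 2), ?_⟩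
  rintro c ⟨x, hx, rfl⟩
  have hx2 : ∑ j, x j ^ 2 = 1 := by
    have := vecNorm_sq x; rw [hx] at this; linarith
  apply Real.sqrt_le_sqrt
  apply Finset.sum_le_sum
  intro i _
  have : (A.mulVec x i) ^ 2 ≤ (∑ j, A i j ^ 2) * (∑ j, x j ^ 2) := by
    have := Finset.sum_mul_sq_le_sq_mul_sq Finset.univ (fun j => A i j) x
    simpa [mulVec, dotProduct, sq] using this
  calc (A.mulVec x i) ^ 2 ≤ (∑ j, A i j ^ 2) * (∑ j, x j ^ 2) := this
    _ = ∑ j, A i j ^ 2 := by rw [hx2, mul_one]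

lemma le_specNorm {m n : ℕ} (A : Matrix (Fin m) (Fin n) ℝ) (x : Fin n → ℝ)
    (hx : vecNorm x = 1) : vecNorm (A *ᵥ x) ≤ specNorm A :=
  le_csSup (specNorm_bddAbove A) ⟨x, hx, rfl⟩

lemma specNorm_nonneg {m n : ℕ} (A : Matrix (Fin m) (Fin n) ℝ) : 0 ≤ specNorm A :=
  Real.sSup_nonneg (by rintro c ⟨x, hx, rfl⟩; exact vecNorm_nonneg _)

lemma specNorm_le {m n : ℕ} (A : Matrix (Fin m) (Fin n) ℝ) (c : ℝ) (hc : 0 ≤ c)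
    (h : ∀ x : Fin n → ℝ, vecNorm x = 1 → vecNorm (A *ᵥ x) ≤ c) : specNorm A ≤ c :=
  Real.sSup_le (by rintro b ⟨x, hx, rfl⟩; exact h x hx) hc

lemma psd_quad {k : ℕ} {M : Matrix (Fin k) (Fin k) ℝ} (h : PosSemidef M) (x : Fin k → ℝ) :
    0 ≤ x ⬝ᵥ (M *ᵥ x) := by simpa using h.dotProduct_mulVec_nonneg x

lemma smul_one_diag {k : ℕ} (c : ℝ) :
    c • (1 : Matrix (Fin k) (Fin k) ℝ) = diagonal (fun _ => c) := by
  ext i j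
  by_cases h : i = j <;> simp [Matrix.one_apply, diagonal, h]

noncomputable def Matrix.PosSemidef.sqrt {k : ℕ} {G : Matrix (Fin k) (Fin k) ℝ}
    (hG : PosSemidef G) : Matrix (Fin k) (Fin k) ℝ :=
  hG.1.eigenvectorUnitary.1 * diagonal ((↑) ∘ Real.sqrt ∘ hG.1.eigenvalues) *
    (star hG.1.eigenvectorUnitary : Matrix (Fin k) (Fin k) ℝ)

lemma Matrix.PosSemidef.posSemidef_sqrt {k : ℕ} {G : Matrix (Fin k) (Fin k) ℝ}
    (hG : PosSemidef G) : PosSemidef hG.sqrt := by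
  unfold Matrix.PosSemidef.sqrt
  have hs : (star hG.1.eigenvectorUnitary : Matrix (Fin k) (Fin k) ℝ)
      = (hG.1.eigenvectorUnitary.1)ᴴ := rfl
  rw [hs]
  apply PosSemidef.mul_mul_conjTranspose_same
  exact posSemidef_diagonal_iff.mpr fun i => by simp [Real.sqrt_nonneg]

lemma Matrix.PosSemidef.sqrt_mul_self {k : ℕ} {G : Matrix (Fin k) (Fin k) ℝ}
    (hG : PosSemidef G) : hG.sqrt * hG.sqrt = G := by
  unfold Matrix.PosSemidef.sqrt
  have hUU : (star hG.1.eigenvectorUnitary : Matrix (Fin k) (Fin k) ℝ) *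
      hG.1.eigenvectorUnitary.1 = 1 := Unitary.coe_star_mul_self _
  have hD : diagonal ((↑) ∘ Real.sqrt ∘ hG.1.eigenvalues : Fin k → ℝ) *
      diagonal ((↑) ∘ Real.sqrt ∘ hG.1.eigenvalues : Fin k → ℝ)
      = diagonal (RCLike.ofReal ∘ hG.1.eigenvalues : Fin k → ℝ) := by
    rw [diagonal_mul_diagonal]
    congr 1
    funext i
    simp [Real.mul_self_sqrt (hG.eigenvalues_nonneg i)]
  conv_rhs => rw [hG.1.spectral_theorem]
  open Unitary in rw [conjStarAlgAut_apply, ← hD]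
  simp only [Matrix.mul_assoc]
  rw [← Matrix.mul_assoc (star hG.1.eigenvectorUnitary : Matrix (Fin k) (Fin k) ℝ)
    hG.1.eigenvectorUnitary.1, hUU, Matrix.one_mul]

lemma sqrt_trace {k : ℕ} {G : Matrix (Fin k) (Fin k) ℝ} (hG : PosSemidef G) :
    trace hG.sqrt = ∑ i, Real.sqrt (hG.1.eigenvalues i) := by
  have hdef : hG.sqrt = hG.1.eigenvectorUnitary.1 *
      diagonal ((↑) ∘ Real.sqrt ∘ hG.1.eigenvalues) *
      (star hG.1.eigenvectorUnitary : Matrix (Fin k) (Fin k) ℝ) := rfl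
  rw [hdef, trace_mul_comm, ← mul_assoc, Unitary.coe_star_mul_self, one_mul, trace_diagonal]
  simp [RCLike.ofReal_real_eq_id]

lemma sqrt_quad_lb {k : ℕ} {G : Matrix (Fin k) (Fin k) ℝ} (hG : PosSemidef G) (c : ℝ)
    (hc : ∀ i, c ≤ Real.sqrt (hG.1.eigenvalues i)) (x : Fin k → ℝ) :
    c * (x ⬝ᵥ x) ≤ x ⬝ᵥ (hG.sqrt *ᵥ x) := by
  have hdef : hG.sqrt = hG.1.eigenvectorUnitary.1 *
      diagonal ((↑) ∘ Real.sqrt ∘ hG.1.eigenvalues) *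
      (star hG.1.eigenvectorUnitary : Matrix (Fin k) (Fin k) ℝ) := rfl
  set Q : Matrix (Fin k) (Fin k) ℝ := hG.1.eigenvectorUnitary.1 with hQ
  have hQs : (star hG.1.eigenvectorUnitary : Matrix (Fin k) (Fin k) ℝ) = Qᴴ := rfl
  have hQQs : Q * Qᴴ = 1 := Unitary.coe_mul_star_self hG.1.eigenvectorUnitary
  have hpsd : PosSemidef (hG.sqrt - c • 1) := by
    have hrep : hG.sqrt - c • (1 : Matrix (Fin k) (Fin k) ℝ)
        = Q * diagonal (fun i => Real.sqrt (hG.1.eigenvalues i) - c) * Qᴴ := by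
      rw [hdef, hQs]
      have h1 : diagonal ((↑) ∘ Real.sqrt ∘ hG.1.eigenvalues : Fin k → ℝ)
          = diagonal (fun i => Real.sqrt (hG.1.eigenvalues i)) := by
        congr 1
      have h2 : (diagonal (fun i => Real.sqrt (hG.1.eigenvalues i) - c) : Matrix (Fin k) (Fin k) ℝ)
          = diagonal (fun i => Real.sqrt (hG.1.eigenvalues i)) - diagonal (fun _ => c) := by
        rw [diagonal_sub]
      rw [h1, h2, smul_one_diag, mul_sub, sub_mul]
      congr 1
      rw [← smul_one_diag, Matrix.mul_smul, Matrix.mul_one, Matrix.smul_mul, hQQs]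
    rw [hrep]
    apply PosSemidef.mul_mul_conjTranspose_same
    exact posSemidef_diagonal_iff.mpr fun i => sub_nonneg.mpr (hc i)
  have h0 := psd_quad hpsd x
  have hexp : x ⬝ᵥ ((hG.sqrt - c • 1) *ᵥ x) = x ⬝ᵥ (hG.sqrt *ᵥ x) - c * (x ⬝ᵥ x) := by
    rw [sub_mulVec, dotProduct_sub]
    congr 1
    rw [smul_mulVec, one_mulVec, dotProduct_smul]
    rfl
  rw [hexp] at h0
  linarith

lemma polar_exists {k : ℕ} (W : Matrix (Fin k) (Fin k) ℝ) {P : Matrix (Fin k) (Fin k) ℝ}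
    (hPsym : Pᵀ = P) (hPP : P * P = Wᵀ * W) :
    ∃ R : Matrix (Fin k) (Fin k) ℝ, Rᵀ * R = 1 ∧ R * P = W := by
  classical
  let pl : EuclideanSpace ℝ (Fin k) →ₗ[ℝ] EuclideanSpace ℝ (Fin k) := Matrix.toEuclideanLin P
  let wl : EuclideanSpace ℝ (Fin k) →ₗ[ℝ] EuclideanSpace ℝ (Fin k) := Matrix.toEuclideanLin W
  have normeq : ∀ y : EuclideanSpace ℝ (Fin k),
      ‖y‖ = Real.sqrt ((fun i => y i) ⬝ᵥ (fun i => y i)) := by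
    intro y
    rw [EuclideanSpace.norm_eq]
    congr 1
    simp [dotProduct, sq, Real.norm_eq_abs, ← abs_mul, abs_mul_self]
  have key : ∀ x : EuclideanSpace ℝ (Fin k), ‖wl x‖ = ‖pl x‖ := by
    intro x
    rw [normeq, normeq]
    congr 1
    have h1 : (fun i => wl x i) ⬝ᵥ (fun i => wl x i) = (W *ᵥ x) ⬝ᵥ (W *ᵥ x) := rfl
    have h2 : (fun i => pl x i) ⬝ᵥ (fun i => pl x i) = (P *ᵥ x) ⬝ᵥ (P *ᵥ x) := rfl
    rw [h1, h2, quad, quad, hPsym, hPP]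
  have hker : LinearMap.ker pl ≤ LinearMap.ker wl := by
    intro x hx
    rw [LinearMap.mem_ker] at hx ⊢
    have := key x
    rw [hx, norm_zero] at this
    exact norm_eq_zero.mp this
  let e := pl.quotKerEquivRange
  let w' : (EuclideanSpace ℝ (Fin k) ⧸ LinearMap.ker pl) →ₗ[ℝ] EuclideanSpace ℝ (Fin k) :=
    (LinearMap.ker pl).liftQ wl hker
  let L0 : LinearMap.range pl →ₗ[ℝ] EuclideanSpace ℝ (Fin k) := w'.comp e.symm.toLinearMap
  have hL0 : ∀ x : EuclideanSpace ℝ (Fin k), ∀ hm : pl x ∈ LinearMap.range pl,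
      L0 ⟨pl x, hm⟩ = wl x := by
    intro x hm
    have he : e (Submodule.Quotient.mk x) = ⟨pl x, hm⟩ := by
      apply Subtype.ext
      exact pl.quotKerEquivRange_apply_mk x
    have hsymm : e.symm ⟨pl x, hm⟩ = Submodule.Quotient.mk x := by
      rw [← he, LinearEquiv.symm_apply_apply]
    show w' (e.symm ⟨pl x, hm⟩) = wl x
    rw [hsymm]
    rfl
  have hL0norm : ∀ s : LinearMap.range pl, ‖L0 s‖ = ‖s‖ := by
    rintro ⟨s, hs⟩
    obtain ⟨x, rfl⟩ := hs
    rw [hL0 x (LinearMap.mem_range_self pl x), key x]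
    rfl
  let L : LinearMap.range pl →ₗᵢ[ℝ] EuclideanSpace ℝ (Fin k) := ⟨L0, hL0norm⟩
  let Lx := L.extend
  let R : Matrix (Fin k) (Fin k) ℝ := Matrix.toEuclideanLin.symm Lx.toLinearMap
  have hR : Matrix.toEuclideanLin R = Lx.toLinearMap := LinearEquiv.apply_symm_apply _ _
  have hRapp : ∀ x : EuclideanSpace ℝ (Fin k), ∀ i, (R *ᵥ x) i = Lx x i := by
    intro x i
    have : Matrix.toEuclideanLin R x = Lx x := by rw [hR]; rfl
    exact congrFun (congrArg (fun f => (fun j => f j)) this) i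
  have hRP : R * P = W := by
    apply Matrix.toEuclideanLin.injective
    apply LinearMap.ext
    intro x
    have hmem : pl x ∈ LinearMap.range pl := LinearMap.mem_range_self pl x
    have h1 : Matrix.toEuclideanLin (R * P) x = Lx (pl x) := by
      ext i
      show ((R * P) *ᵥ x) i = Lx (pl x) i
      rw [← mulVec_mulVec]
      exact hRapp (pl x) i
    have h2 : Lx (pl x) = wl x := by
      have := L.extend_apply ⟨pl x, hmem⟩
      rw [← hL0 x hmem]
      exact this
    rw [h1, h2]
  have hRtR : Rᵀ * R = 1 := by
    ext i j
    have hcol : ∀ (j : Fin k) (l : Fin k), R l j = Lx (EuclideanSpace.single j (1:ℝ)) l := by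
      intro j l
      have h := hRapp (EuclideanSpace.single j (1:ℝ)) l
      rw [← h]
      symm
      show (∑ m, R l m * (EuclideanSpace.single j (1:ℝ)) m) = R l j
      simp [EuclideanSpace.single_apply]
    have hinner := Lx.inner_map_map (EuclideanSpace.single i (1:ℝ)) (EuclideanSpace.single j (1:ℝ))
    have hlhs : (Rᵀ * R) i j = ∑ l, R l i * R l j := by
      simp [Matrix.mul_apply, transpose_apply]
    have hin2 : (inner ℝ (Lx (EuclideanSpace.single i (1:ℝ))) (Lx (EuclideanSpace.single j (1:ℝ))) : ℝ)
        = ∑ l, Lx (EuclideanSpace.single i (1:ℝ)) l * Lx (EuclideanSpace.single j (1:ℝ)) l := by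
      rw [PiLp.inner_apply]
      simp [RCLike.inner_apply]
      exact Finset.sum_congr rfl fun _ _ => mul_comm _ _
    calc (Rᵀ * R) i j = ∑ l, R l i * R l j := hlhs
      _ = ∑ l, Lx (EuclideanSpace.single i (1:ℝ)) l * Lx (EuclideanSpace.single j (1:ℝ)) l := by
          refine Finset.sum_congr rfl fun l _ => by rw [hcol i l, hcol j l]
      _ = inner ℝ (Lx (EuclideanSpace.single i (1:ℝ))) (Lx (EuclideanSpace.single j (1:ℝ))) := hin2.symm
      _ = inner ℝ (EuclideanSpace.single i (1:ℝ)) (EuclideanSpace.single j (1:ℝ)) := hinner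
      _ = (1 : Matrix (Fin k) (Fin k) ℝ) i j := by
          rw [PiLp.inner_apply]
          simp [RCLike.inner_apply, EuclideanSpace.single_apply, Matrix.one_apply, eq_comm]
  exact ⟨R, hRtR, hRP⟩

lemma key_ineq {n k : ℕ} (Ustar Ubar : Matrix (Fin n) (Fin k) ℝ)
    (hUstar : Ustarᵀ * Ustar = 1) (hUbar : Ubarᵀ * Ubar = 1) (y : Fin k → ℝ)
    (hy : ∑ j, y j ^ 2 = 1) :
    1 - y ⬝ᵥ (((Ustarᵀ * Ubar)ᵀ * (Ustarᵀ * Ubar)) *ᵥ y) ≤ distS Ubar Ustar ^ 2 := by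
  set W := Ustarᵀ * Ubar with hW
  set M := Ubar * Ubarᵀ - Ustar * Ustarᵀ with hM
  have hDM : distS Ubar Ustar = specNorm M := rfl
  set v := Ubar *ᵥ y with hv
  have hvv : v ⬝ᵥ v = 1 := by
    rw [hv, quad, hUbar, one_mulVec, ← sum_sq_eq_dot, hy]
  have hv1 : vecNorm v = 1 := by
    rw [vecNorm, sum_sq_eq_dot, hvv, Real.sqrt_one]
  have h1 : vecNorm (M *ᵥ v) ≤ distS Ubar Ustar := by
    rw [hDM]; exact le_specNorm M v hv1
  have hMv : M *ᵥ v = (Ubar - Ustar * W) *ᵥ y := by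
    rw [hv, mulVec_mulVec]
    congr 1
    rw [hM, Matrix.sub_mul, Matrix.mul_assoc Ubar, hUbar, Matrix.mul_one, Matrix.mul_assoc Ustar, ← hW]
  have hmat : (Ubar - Ustar * W)ᵀ * (Ubar - Ustar * W) = 1 - Wᵀ * W := by
    have hBA : Ubarᵀ * Ustar = Wᵀ := by rw [hW, transpose_mul, transpose_transpose]
    have e1 : Wᵀ * Ustarᵀ * Ubar = Wᵀ * W := by rw [Matrix.mul_assoc, ← hW]
    have e2 : Ubarᵀ * (Ustar * W) = Wᵀ * W := by rw [← Matrix.mul_assoc, hBA]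
    have e3 : Wᵀ * Ustarᵀ * (Ustar * W) = Wᵀ * W := by
      rw [Matrix.mul_assoc Wᵀ, ← Matrix.mul_assoc Ustarᵀ, hUstar, Matrix.one_mul]
    rw [transpose_sub, transpose_mul, Matrix.sub_mul, Matrix.mul_sub, Matrix.mul_sub, hUbar,
      e1, e2, e3]
    abel
  have h2 : (M *ᵥ v) ⬝ᵥ (M *ᵥ v) = 1 - y ⬝ᵥ ((Wᵀ * W) *ᵥ y) := by
    rw [hMv, quad, hmat, sub_mulVec, dotProduct_sub, one_mulVec, ← sum_sq_eq_dot, hy]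
  have h3 : (M *ᵥ v) ⬝ᵥ (M *ᵥ v) ≤ distS Ubar Ustar ^ 2 := by
    rw [← sum_sq_eq_dot, ← vecNorm_sq]
    exact pow_le_pow_left₀ (vecNorm_nonneg _) h1 2
  rw [h2] at h3
  exact h3

end aux

theorem stmt_8 {n k : ℕ} (Ustar Ubar : Matrix (Fin n) (Fin k) ℝ)
    (hUstar : Ustarᵀ * Ustar = 1) (hUbar : Ubarᵀ * Ubar = 1) :
    ∃ R : Matrix (Fin k) (Fin k) ℝ, Rᵀ * R = 1 ∧
      specNorm (Ustar * R - Ubar) ^ 2 ≤ 2 * distS Ubar Ustar ^ 2 ∧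
      frobNorm (Ustar * R - Ubar) ≤ Real.sqrt (2 * k) * distS Ubar Ustar := by
  classical
  set D := distS Ubar Ustar with hD
  have hDnn : 0 ≤ D := specNorm_nonneg _
  set W := Ustarᵀ * Ubar with hWdef
  have hGpsd : PosSemidef (Wᵀ * W) := by
    have := posSemidef_conjTranspose_mul_self W
    rwa [conjT_eq] at this
  set P := hGpsd.sqrt with hPdef
  have hPsym : Pᵀ = P := by
    rw [← conjT_eq]
    exact hGpsd.posSemidef_sqrt.1
  have hPP : P * P = Wᵀ * W := hGpsd.sqrt_mul_self
  obtain ⟨R, hRtR, hRP⟩ := polar_exists W hPsym hPP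
  have hRtW : Rᵀ * W = P := by
    rw [← hRP, ← mul_assoc, hRtR, one_mul]
  have hWtR : Wᵀ * R = P := by
    have : (Rᵀ * W)ᵀ = Pᵀ := by rw [hRtW]
    rw [transpose_mul, transpose_transpose] at this
    rw [this, hPsym]
  set E := Ustar * R - Ubar with hE
  have hBA : Ubarᵀ * Ustar = Wᵀ := by rw [hWdef, transpose_mul, transpose_transpose]
  have hEtE : Eᵀ * E = (2:ℝ) • (1 : Matrix (Fin k) (Fin k) ℝ) - (2:ℝ) • P := by
    have f1 : Rᵀ * Ustarᵀ * (Ustar * R) = 1 := by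
      rw [Matrix.mul_assoc Rᵀ, ← Matrix.mul_assoc Ustarᵀ, hUstar, Matrix.one_mul, hRtR]
    have f2 : Rᵀ * Ustarᵀ * Ubar = P := by rw [Matrix.mul_assoc, ← hWdef, hRtW]
    have f3 : Ubarᵀ * (Ustar * R) = P := by rw [← Matrix.mul_assoc, hBA, hWtR]
    rw [hE, transpose_sub, transpose_mul, Matrix.sub_mul, Matrix.mul_sub, Matrix.mul_sub, hUbar,
      f1, f2, f3]
    ext i j
    simp [Matrix.sub_apply, Matrix.smul_apply, Matrix.one_apply]
    split <;> ring
  -- eigenvalue bounds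
  have hlam : ∀ i, 1 - D ^ 2 ≤ hGpsd.1.eigenvalues i := by
    intro i
    set u : Fin k → ℝ := fun j => hGpsd.1.eigenvectorBasis i j with hu
    have hnorm : ‖hGpsd.1.eigenvectorBasis i‖ = 1 := (hGpsd.1.eigenvectorBasis.orthonormal).1 i
    have hsum : ∑ j, u j ^ 2 = 1 := by
      have h := congrArg (fun t => t ^ 2) hnorm
      rw [EuclideanSpace.norm_eq] at h
      simp only [one_pow] at h
      rw [Real.sq_sqrt (Finset.sum_nonneg fun _ _ => sq_nonneg _)] at h
      simpa [Real.norm_eq_abs, sq_abs] using h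
    have heig : (Wᵀ * W) *ᵥ u = hGpsd.1.eigenvalues i • u := hGpsd.1.mulVec_eigenvectorBasis i
    have hkey := key_ineq Ustar Ubar hUstar hUbar u hsum
    rw [← hWdef] at hkey
    rw [heig] at hkey
    rw [dotProduct_smul] at hkey
    have : (u ⬝ᵥ u : ℝ) = 1 := by rw [← sum_sq_eq_dot, hsum]
    rw [smul_eq_mul] at hkey
    rw [this, mul_one] at hkey
    rw [← hD] at hkey
    linarith
  have hsqrtc : ∀ i, 1 - D ^ 2 ≤ Real.sqrt (hGpsd.1.eigenvalues i) := by
    intro i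
    by_cases h : 1 - D ^ 2 ≤ 0
    · exact h.trans (Real.sqrt_nonneg _)
    · push_neg at h
      have h1 : (1 - D ^ 2) ^ 2 ≤ hGpsd.1.eigenvalues i := by
        nlinarith [hlam i, sq_nonneg D]
      exact (Real.le_sqrt h.le (hGpsd.eigenvalues_nonneg i)).mpr h1
  -- spectral norm bound
  have hquadE : ∀ x : Fin k → ℝ, x ⬝ᵥ x = 1 → (E *ᵥ x) ⬝ᵥ (E *ᵥ x) ≤ 2 * D ^ 2 := by
    intro x hx
    have hPx : (1 - D ^ 2) * (x ⬝ᵥ x) ≤ x ⬝ᵥ (P *ᵥ x) := sqrt_quad_lb hGpsd _ hsqrtc x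
    rw [hx, mul_one] at hPx
    have hcomp : (E *ᵥ x) ⬝ᵥ (E *ᵥ x) = 2 - 2 * (x ⬝ᵥ (P *ᵥ x)) := by
      rw [quad, hEtE, sub_mulVec, dotProduct_sub, smul_mulVec, smul_mulVec,
        one_mulVec, dotProduct_smul, dotProduct_smul, hx]
      simp
    rw [hcomp]
    linarith
  have hspec : specNorm E ≤ Real.sqrt 2 * D := by
    apply specNorm_le _ _ (mul_nonneg (Real.sqrt_nonneg _) hDnn)
    intro x hx
    have hx2 : x ⬝ᵥ x = 1 := by
      rw [← sum_sq_eq_dot, ← vecNorm_sq, hx, one_pow]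
    have h1 : vecNorm (E *ᵥ x) = Real.sqrt ((E *ᵥ x) ⬝ᵥ (E *ᵥ x)) := by
      rw [vecNorm, sum_sq_eq_dot]
    rw [h1]
    have h2 := hquadE x hx2
    calc Real.sqrt ((E *ᵥ x) ⬝ᵥ (E *ᵥ x)) ≤ Real.sqrt (2 * D ^ 2) := Real.sqrt_le_sqrt h2
      _ = Real.sqrt 2 * D := by
          rw [Real.sqrt_mul (by norm_num) (D ^ 2), Real.sqrt_sq hDnn]
  have hspec2 : specNorm E ^ 2 ≤ 2 * D ^ 2 := by
    have := pow_le_pow_left₀ (specNorm_nonneg E) hspec 2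
    rwa [mul_pow, Real.sq_sqrt (by norm_num : (0:ℝ) ≤ 2)] at this
  -- Frobenius bound
  have htr1 : ∑ i, ∑ j, E i j ^ 2 = trace (Eᵀ * E) := by
    rw [trace]
    rw [Finset.sum_comm]
    apply Finset.sum_congr rfl
    intro j _
    simp [Matrix.diag, Matrix.mul_apply, transpose_apply, sq]
  have htrP : trace P = ∑ i, Real.sqrt (hGpsd.1.eigenvalues i) := sqrt_trace hGpsd
  have htrlb : (k : ℝ) * (1 - D ^ 2) ≤ trace P := by
    rw [htrP]
    calc (k : ℝ) * (1 - D ^ 2) = ∑ _i : Fin k, (1 - D ^ 2) := by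
          rw [Finset.sum_const, Finset.card_univ, Fintype.card_fin, nsmul_eq_mul]
      _ ≤ ∑ i, Real.sqrt (hGpsd.1.eigenvalues i) := Finset.sum_le_sum fun i _ => hsqrtc i
  have htr2 : trace (Eᵀ * E) = 2 * k - 2 * trace P := by
    rw [hEtE, trace_sub, trace_smul, trace_smul, trace_one]
    simp [Fintype.card_fin, smul_eq_mul]
  have hfr : ∑ i, ∑ j, E i j ^ 2 ≤ 2 * k * D ^ 2 := by
    rw [htr1, htr2]
    nlinarith [htrlb]
  have hfrob : frobNorm E ≤ Real.sqrt (2 * k) * D := by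
    rw [frobNorm]
    calc Real.sqrt (∑ i, ∑ j, E i j ^ 2) ≤ Real.sqrt (2 * k * D ^ 2) := Real.sqrt_le_sqrt hfr
      _ = Real.sqrt (2 * k) * D := by
          rw [Real.sqrt_mul (by positivity) (D ^ 2), Real.sqrt_sq hDnn]
  exact ⟨R, hRtR, hspec2, hfrob⟩
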